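/- (Duration part of Theorem 1.) Let ξ be a DoS sequence satisfying Assumption 1, and let B̂_d(t) be generated by the DoS estimator with parameters ℓ ≥ 2, ε₀ ∈ (0,1), θ ∈ (0,1). Then there exists a finite T ≥ 0 such that for every t ≥ T, the value B̂_d(t) is a duration-bound of ξ (i.e., B̂_d(t) ∈ D(ξ)). -/

import Mathlib

open MeasureTheory Filter Set

/-- The union of all DoS intervals `[h n, h n + τ n)`, `n ≥ 1`. -/
def DoSUnion (h τ : ℕ → ℝ) : Set ℝ :=
  ⋃ n ∈ Set.Ici (1 : ℕ), Set.Ico (h n) (h n + τ n)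

/-- `|Ξ(0,t)|`: the Lebesgue measure of the part of `[0,t]` under DoS attack. -/
noncomputable def xiMeas (h τ : ℕ → ℝ) (t : ℝ) : ℝ :=
  (volume (DoSUnion h τ ∩ Set.Icc 0 t)).toReal

/-- `n_ξ(0,t)`: the number of DoS off-to-on transitions `h n` lying in `[0,t]`. -/
noncomputable def nXi (h : ℕ → ℝ) (t : ℝ) : ℕ :=
  Set.ncard ({x : ℝ | ∃ n : ℕ, 1 ≤ n ∧ h n = x} ∩ Set.Icc 0 t)

/-- `ξ = (h, τ)` is a DoS sequence. -/
def IsDoS (h τ : ℕ → ℝ) : Prop :=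
  0 ≤ h 1 ∧ (∀ n, 1 ≤ n → 0 ≤ τ n) ∧ (∀ n, 1 ≤ n → h n + τ n < h (n + 1))

/-- `B` is a duration-bound of `ξ`. -/
def IsDurationBound (h τ : ℕ → ℝ) (B : ℝ) : Prop :=
  0 ≤ B ∧ B ≤ 1 ∧ ∃ κ > (0 : ℝ), ∀ t ≥ (0 : ℝ), xiMeas h τ t ≤ κ + B * t

/-- `D(ξ)`: the set of duration-bounds of `ξ`. -/
def durBounds (h τ : ℕ → ℝ) : Set ℝ := {B | IsDurationBound h τ B}

/-- `B` is a (finite) frequency-bound of `ξ`. -/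
def IsFreqBound (h : ℕ → ℝ) (B : ℝ) : Prop :=
  0 ≤ B ∧ ∃ Λ > (0 : ℝ), ∀ t ≥ (0 : ℝ), (nXi h t : ℝ) ≤ Λ + B * t

/-- `F(ξ)`: the set of finite frequency-bounds of `ξ`. -/
def freqBounds (h : ℕ → ℝ) : Set ℝ := {B | IsFreqBound h B}

/-- Assumption 1: `ξ` is not an edge case. -/
def Assumption1 (h τ : ℕ → ℝ) : Prop :=
  sInf (durBounds h τ) < 1 ∧ (freqBounds h).Nonempty ∧
    ∃ Γ > (0 : ℝ), ∀ n, 1 ≤ n → τ n ≤ Γ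

/-- `Bd` is the duration estimator generated by (8). -/
def IsDurEstimator (h τ : ℕ → ℝ) (l : ℕ) (ε₀ θ : ℝ) (Bd : ℝ → ℝ) : Prop :=
  (∀ t, 0 ≤ t → t < h l + τ l → Bd t = ε₀) ∧
  ∀ n, ∀ hn : l ≤ n, ∀ t, h n + τ n ≤ t → t < h (n + 1) + τ (n + 1) →
    Bd t = (Finset.Icc l n).sup' (Finset.nonempty_Icc.mpr hn)
      (fun i => max ε₀ (θ * (xiMeas h τ (h i + τ i) / (h i + τ i)) + (1 - θ)))

/-- `Bf` is the frequency estimator generated by (9). -/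
def IsFreqEstimator (h : ℕ → ℝ) (l : ℕ) (ε₀ θ : ℝ) (Bf : ℝ → ℝ) : Prop :=
  (∀ t, 0 ≤ t → t < h l → Bf t = ε₀) ∧
  ∀ n, ∀ hn : l ≤ n, ∀ t, h n ≤ t → t < h (n + 1) →
    Bf t = (Finset.Icc l n).sup' (Finset.nonempty_Icc.mpr hn)
      (fun i => max ε₀ (((i : ℝ) / h i) / θ))

section helpers
variable {h τ : ℕ → ℝ}

lemma h_mono (hξ : IsDoS h τ) {m n : ℕ} (hm : 1 ≤ m) (hmn : m ≤ n) : h m ≤ h n := by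
  induction n, hmn using Nat.le_induction with
  | base => exact le_refl _
  | succ k hk ih =>
    exact ih.trans (le_of_lt (lt_of_le_of_lt
      (le_add_of_nonneg_right (hξ.2.1 k (hm.trans hk))) (hξ.2.2 k (hm.trans hk))))

lemma h_strict (hξ : IsDoS h τ) {m n : ℕ} (hm : 1 ≤ m) (hmn : m < n) : h m < h n := by
  have h1 : h m < h (m + 1) := lt_of_le_of_lt
    (le_add_of_nonneg_right (hξ.2.1 m hm)) (hξ.2.2 m hm)
  exact lt_of_lt_of_le h1 (h_mono hξ (by omega) hmn)

lemma h_nonneg (hξ : IsDoS h τ) {n : ℕ} (hn : 1 ≤ n) : 0 ≤ h n :=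
  hξ.1.trans (h_mono hξ le_rfl hn)

lemma h_pos (hξ : IsDoS h τ) {n : ℕ} (hn : 2 ≤ n) : 0 < h n := by
  have h2 : h 1 + τ 1 < h 2 := hξ.2.2 1 le_rfl
  have : 0 < h 2 := lt_of_le_of_lt (by linarith [hξ.1, hξ.2.1 1 le_rfl] : (0:ℝ) ≤ h 1 + τ 1) h2
  exact this.trans_le (h_mono hξ (by omega) hn)

lemma s_pos (hξ : IsDoS h τ) {n : ℕ} (hn : 2 ≤ n) : 0 < h n + τ n :=
  lt_of_lt_of_le (h_pos hξ hn) (le_add_of_nonneg_right (hξ.2.1 n (by omega)))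

lemma s_mono (hξ : IsDoS h τ) {m n : ℕ} (hm : 1 ≤ m) (hmn : m ≤ n) :
    h m + τ m ≤ h n + τ n := by
  rcases eq_or_lt_of_le hmn with rfl | hlt
  · exact le_rfl
  · have h1 : h m + τ m < h (m + 1) := hξ.2.2 m hm
    have h2 : h (m + 1) ≤ h n := h_mono hξ (by omega) hlt
    have h3 : (0:ℝ) ≤ τ n := hξ.2.1 n (by omega)
    linarith

lemma xiMeas_nonneg (t : ℝ) : 0 ≤ xiMeas h τ t := ENNReal.toReal_nonneg

lemma vol_ne_top (t : ℝ) : volume (DoSUnion h τ ∩ Set.Icc 0 t) ≠ ⊤ := by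
  have h1 : volume (DoSUnion h τ ∩ Set.Icc 0 t) ≤ volume (Set.Icc (0:ℝ) t) :=
    measure_mono inter_subset_right
  rw [Real.volume_Icc] at h1
  exact ne_top_of_le_ne_top ENNReal.ofReal_ne_top h1

lemma xiMeas_le {t : ℝ} (ht : 0 ≤ t) : xiMeas h τ t ≤ t := by
  have h1 : volume (DoSUnion h τ ∩ Set.Icc 0 t) ≤ ENNReal.ofReal t := by
    calc volume (DoSUnion h τ ∩ Set.Icc 0 t) ≤ volume (Set.Icc (0:ℝ) t) :=
          measure_mono inter_subset_right
      _ = ENNReal.ofReal t := by rw [Real.volume_Icc]; ring_nf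
  calc xiMeas h τ t ≤ (ENNReal.ofReal t).toReal := ENNReal.toReal_mono ENNReal.ofReal_ne_top h1
    _ = t := ENNReal.toReal_ofReal ht

lemma xiMeas_window (hξ : IsDoS h τ) {n : ℕ} (hn : 1 ≤ n) {t : ℝ}
    (ht : t < h (n + 1) + τ (n + 1)) :
    xiMeas h τ t ≤ xiMeas h τ (h n + τ n) + τ (n + 1) := by
  set B := DoSUnion h τ ∩ Set.Icc 0 (h n + τ n)
  set C := Set.Ico (h (n + 1)) (h (n + 1) + τ (n + 1))
  have hsub : DoSUnion h τ ∩ Set.Icc 0 t ⊆ B ∪ C := by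
    rintro x ⟨hxU, hx0, hxt⟩
    obtain ⟨m, hm2, hm1, hm3⟩ : ∃ m, h m ≤ x ∧ 1 ≤ m ∧ x < h m + τ m := by
      simpa [DoSUnion] using hxU
    have hxm : x ∈ Set.Ico (h m) (h m + τ m) := ⟨hm2, hm3⟩
    rcases lt_or_ge m (n + 1) with hmn | hmn
    · left
      refine ⟨hxU, hx0, ?_⟩
      have : h m + τ m ≤ h n + τ n := s_mono hξ hm1 (by omega)
      exact le_of_lt (lt_of_lt_of_le hxm.2 this)
    · rcases eq_or_lt_of_le hmn with heq | hlt
      · right; subst heq; exact hxm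
      · exfalso
        have h1 : h (n + 1) + τ (n + 1) < h (n + 2) := hξ.2.2 (n + 1) (by omega)
        have h2 : h (n + 2) ≤ h m := h_mono hξ (by omega) hlt
        have := hxm.1
        linarith
  have hvol : volume (DoSUnion h τ ∩ Set.Icc 0 t) ≤ volume B + ENNReal.ofReal (τ (n + 1)) := by
    calc volume (DoSUnion h τ ∩ Set.Icc 0 t) ≤ volume (B ∪ C) := measure_mono hsub
      _ ≤ volume B + volume C := measure_union_le _ _
      _ = volume B + ENNReal.ofReal (τ (n + 1)) := by
          rw [Real.volume_Ico]; ring_nf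
  have hfin : volume B + ENNReal.ofReal (τ (n + 1)) ≠ ⊤ :=
    ENNReal.add_ne_top.mpr ⟨vol_ne_top _, ENNReal.ofReal_ne_top⟩
  calc xiMeas h τ t ≤ (volume B + ENNReal.ofReal (τ (n + 1))).toReal :=
        ENNReal.toReal_mono hfin hvol
    _ = xiMeas h τ (h n + τ n) + τ (n + 1) := by
        rw [ENNReal.toReal_add (vol_ne_top _) ENNReal.ofReal_ne_top,
          ENNReal.toReal_ofReal (hξ.2.1 (n + 1) (by omega))]
        rfl

lemma nXi_h (hξ : IsDoS h τ) {N : ℕ} (hN : 1 ≤ N) : nXi h (h N) = N := by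
  have hset : {x : ℝ | ∃ n : ℕ, 1 ≤ n ∧ h n = x} ∩ Set.Icc 0 (h N)
      = h '' (Set.Icc 1 N) := by
    ext x
    constructor
    · rintro ⟨⟨n, hn1, rfl⟩, _, hle⟩
      refine ⟨n, ⟨hn1, ?_⟩, rfl⟩
      by_contra hc
      exact absurd hle (not_le.mpr (h_strict hξ hN (by omega)))
    · rintro ⟨n, ⟨hn1, hnN⟩, rfl⟩
      exact ⟨⟨n, hn1, rfl⟩, h_nonneg hξ hn1, h_mono hξ hn1 hnN⟩
  have hinj : Set.InjOn h (Set.Icc 1 N) := by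
    intro a ha b hb hab
    by_contra hne
    rcases Nat.lt_or_ge a b with hab' | hab'
    · exact absurd hab (ne_of_lt (h_strict hξ ha.1 hab'))
    · have : b < a := by omega
      exact absurd hab.symm (ne_of_lt (h_strict hξ hb.1 this))
  rw [nXi, hset, Set.ncard_image_of_injOn hinj, ← Finset.coe_Icc,
    Set.ncard_coe_finset, Nat.card_Icc]
  omega

/-- `h` grows to infinity under a frequency bound. -/
lemma h_unbounded (hξ : IsDoS h τ) {Bf : ℝ} (hBf : IsFreqBound h Bf) (l : ℕ)
    (M : ℝ) : ∃ m, l ≤ m ∧ M < h m := by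
  obtain ⟨hBf0, Λ, hΛ, hbound⟩ := hBf
  by_contra hc
  push_neg at hc
  obtain ⟨n₀, hn₀⟩ := exists_nat_gt (Λ + Bf * M)
  set N := max (max n₀ l) 1 with hNdef
  have hN1 : 1 ≤ N := le_max_right _ _
  have hNl : l ≤ N := le_trans (le_max_right n₀ l) (le_max_left _ _)
  have hhN : h N ≤ M := hc N hNl
  have h0 : (0:ℝ) ≤ h N := h_nonneg hξ hN1
  have hb := hbound (h N) h0
  rw [nXi_h hξ hN1] at hb
  have hmul : Bf * h N ≤ Bf * M := mul_le_mul_of_nonneg_left hhN hBf0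
  have hNn₀ : (n₀ : ℝ) ≤ (N : ℝ) := by
    exact_mod_cast le_trans (le_max_left n₀ l) (le_max_left _ _)
  linarith

/-- existence of a window containing `t`. -/
lemma exists_window (hξ : IsDoS h τ) {Bf : ℝ} (hBf : IsFreqBound h Bf) {l : ℕ}
    (hl : 1 ≤ l) {t : ℝ} (ht : h l + τ l ≤ t) :
    ∃ n, l ≤ n ∧ h n + τ n ≤ t ∧ t < h (n + 1) + τ (n + 1) := by
  obtain ⟨m, hml, hm⟩ := h_unbounded hξ hBf l t
  have hP : ∃ k, t < h (l + k) + τ (l + k) := by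
    refine ⟨m - l, ?_⟩
    have : l + (m - l) = m := by omega
    rw [this]
    exact lt_of_lt_of_le hm (le_add_of_nonneg_right (hξ.2.1 m (by omega)))
  classical
  set K := Nat.find hP with hK
  have hKspec : t < h (l + K) + τ (l + K) := Nat.find_spec hP
  have hK0 : K ≠ 0 := by
    intro h0
    rw [h0] at hKspec
    simp at hKspec
    linarith
  refine ⟨l + (K - 1), by omega, ?_, ?_⟩
  · have := Nat.find_min hP (m := K - 1) (by omega)
    push_neg at this
    exact this
  · have : l + (K - 1) + 1 = l + K := by omega
    rw [this]
    exact hKspec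

end helpers

/-- Theorem 1 (duration part): under Assumption 1, the estimator `Bd` generated
by (8) becomes a reliable duration-bound after some finite time `T`. -/
theorem estimator_duration_reliable (h τ : ℕ → ℝ) (hξ : IsDoS h τ)
    (hA1 : Assumption1 h τ) (l : ℕ) (hl : 2 ≤ l) (ε₀ θ : ℝ)
    (hε₀ : 0 < ε₀ ∧ ε₀ < 1) (hθ : 0 < θ ∧ θ < 1) (Bd : ℝ → ℝ)
    (hBd : IsDurEstimator h τ l ε₀ θ Bd) :
    ∃ T ≥ (0 : ℝ), ∀ t ≥ T, Bd t ∈ durBounds h τ := by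
  obtain ⟨hinf1, ⟨Bf, hBf⟩, Γ, hΓ, hτΓ⟩ := hA1
  set Bs := sInf (durBounds h τ) with hBs
  -- 1 is a duration bound
  have hone : (1:ℝ) ∈ durBounds h τ := by
    refine ⟨zero_le_one, le_rfl, 1, one_pos, fun t ht => ?_⟩
    have := xiMeas_le (h := h) (τ := τ) ht
    linarith
  have hbdd : BddBelow (durBounds h τ) := ⟨0, fun B hB => hB.1⟩
  have hBs0 : 0 ≤ Bs := le_csInf ⟨1, hone⟩ fun B hB => hB.1
  have hBs1 : Bs < 1 := hinf1
  -- membership from strict lower bound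
  have hmem : ∀ B : ℝ, Bs < B → B ≤ 1 → B ∈ durBounds h τ := by
    intro B hlt hB1
    obtain ⟨B', hB', hB'B⟩ := exists_lt_of_csInf_lt ⟨1, hone⟩ hlt
    obtain ⟨hB'0, _, κ, hκ, hbnd⟩ := hB'
    refine ⟨hB'0.trans hB'B.le, hB1, κ, hκ, fun t ht => ?_⟩
    have := hbnd t ht
    nlinarith
  have hsl : 0 < h l + τ l := s_pos hξ hl
  -- each estimator term is at most 1
  have hterm_le_one : ∀ i : ℕ, l ≤ i →
      max ε₀ (θ * (xiMeas h τ (h i + τ i) / (h i + τ i)) + (1 - θ)) ≤ 1 := by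
    intro i hi
    have hsi : 0 < h i + τ i := s_pos hξ (le_trans hl hi)
    have hx : xiMeas h τ (h i + τ i) ≤ h i + τ i := xiMeas_le hsi.le
    have hr : xiMeas h τ (h i + τ i) / (h i + τ i) ≤ 1 := (div_le_one hsi).mpr hx
    have : θ * (xiMeas h τ (h i + τ i) / (h i + τ i)) + (1 - θ) ≤ 1 := by nlinarith [hθ.1]
    exact max_le hε₀.2.le this
  -- Bd on windows
  have hBd_sup : ∀ n, l ≤ n → ∀ t, h n + τ n ≤ t → t < h (n + 1) + τ (n + 1) →
      ∀ i, l ≤ i → i ≤ n →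
      max ε₀ (θ * (xiMeas h τ (h i + τ i) / (h i + τ i)) + (1 - θ)) ≤ Bd t ∧ Bd t ≤ 1 := by
    intro n hn t ht1 ht2 i hi hin
    rw [hBd.2 n hn t ht1 ht2]
    constructor
    · exact Finset.le_sup'
        (fun i => max ε₀ (θ * (xiMeas h τ (h i + τ i) / (h i + τ i)) + (1 - θ)))
        (Finset.mem_Icc.mpr ⟨hi, hin⟩)
    · exact Finset.sup'_le _ _ fun j hj => hterm_le_one j (Finset.mem_Icc.mp hj).1
  rcases lt_or_ge Bs ε₀ with hcase | hcase
  · -- easy case: Bs < ε₀, take T = 0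
    refine ⟨0, le_rfl, fun t ht => ?_⟩
    rcases lt_or_ge t (h l + τ l) with htl | htl
    · rw [hBd.1 t ht htl]
      exact hmem ε₀ hcase hε₀.2.le
    · obtain ⟨n, hnl, hw1, hw2⟩ := exists_window hξ hBf (by omega) htl
      obtain ⟨hge, hle1⟩ := hBd_sup n hnl t hw1 hw2 n hnl le_rfl
      exact hmem (Bd t) (lt_of_lt_of_le hcase (le_trans (le_max_left _ _) hge)) hle1
  · -- main case: ε₀ ≤ Bs
    set c := (Bs - 1 + θ) / θ with hc
    have hkey : ∃ n₀, l ≤ n₀ ∧ c < xiMeas h τ (h n₀ + τ n₀) / (h n₀ + τ n₀) := by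
      by_contra hno
      push_neg at hno
      have hmemc : max c 0 ∈ durBounds h τ := by
        have hc1 : c ≤ 1 := by
          rw [hc, div_le_one hθ.1]; linarith
        refine ⟨le_max_right _ _, max_le hc1 zero_le_one, Γ + (h l + τ l) + 1,
          by linarith, fun t ht => ?_⟩
        rcases lt_or_ge t (h l + τ l) with htl | htl
        · have := xiMeas_le (h := h) (τ := τ) ht
          have : xiMeas h τ t ≤ t := this
          nlinarith [mul_nonneg (le_max_right c 0) ht]
        · obtain ⟨n, hnl, hw1, hw2⟩ := exists_window hξ hBf (by omega) htl
          have hsn : 0 < h n + τ n := s_pos hξ (le_trans hl hnl)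
          have hxn : xiMeas h τ (h n + τ n) ≤ c * (h n + τ n) :=
            (div_le_iff₀ hsn).mp (hno n hnl)
          have hwin := xiMeas_window hξ (n := n) (by omega) hw2
          have hτn : τ (n + 1) ≤ Γ := hτΓ (n + 1) (by omega)
          have h1 : c * (h n + τ n) ≤ max c 0 * (h n + τ n) :=
            mul_le_mul_of_nonneg_right (le_max_left _ _) hsn.le
          have h2 : max c 0 * (h n + τ n) ≤ max c 0 * t :=
            mul_le_mul_of_nonneg_left hw1 (le_max_right _ _)
          linarith
      have hle : Bs ≤ max c 0 := csInf_le hbdd hmemc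
      rcases le_or_gt c 0 with hc0 | hc0
      · rw [max_eq_right hc0] at hle
        linarith [hε₀.1]
      · rw [max_eq_left hc0.le] at hle
        rw [hc, le_div_iff₀ hθ.1] at hle
        nlinarith [mul_pos (sub_pos.mpr hθ.2) (sub_pos.mpr hBs1)]
    obtain ⟨n₀, hn₀l, hrn₀⟩ := hkey
    refine ⟨h n₀ + τ n₀, (s_pos hξ (le_trans hl hn₀l)).le, fun t ht => ?_⟩
    have htl : h l + τ l ≤ t := le_trans (s_mono hξ (by omega) hn₀l) ht
    obtain ⟨n, hnl, hw1, hw2⟩ := exists_window hξ hBf (by omega) htl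
    have hn₀n : n₀ ≤ n := by
      by_contra hcn
      push_neg at hcn
      have : h (n + 1) + τ (n + 1) ≤ h n₀ + τ n₀ := s_mono hξ (by omega) (by omega)
      linarith
    obtain ⟨hge, hle1⟩ := hBd_sup n hnl t hw1 hw2 n₀ hn₀l hn₀n
    have hBs_lt : Bs < Bd t := by
      have h1 : θ * (xiMeas h τ (h n₀ + τ n₀) / (h n₀ + τ n₀)) + (1 - θ) ≤ Bd t :=
        le_trans (le_max_right _ _) hge
      have h2 : θ * c + (1 - θ) = Bs := by
        have hθ0 : θ ≠ 0 := ne_of_gt hθ.1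
        rw [hc]; field_simp; ring
      nlinarith [hθ.1]
    exact hmem (Bd t) hBs_lt hle1
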